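/- The transformation matrix M encoding the pre-wavelet change of basis in one dimension is invertible: the (2^{t+1}−1)×(2^{t+1}−1) band matrix M with diagonal pattern built from the rows (9/10, 1/2, 1/10), (−3/5, 1, −3/5), (1/10, 1/2, 1, …) as in equation (matrixM) has nonzero determinant for every t ≥ 1. In particular for t = 1 the 3×3 matrix [[9/10, 1/2, 1/10],[−3/5, 1, −3/5],[1/10, 1/2, 9/10]] is invertible. -/

import Mathlib

/-- The `(2^{t+1}-1) × (2^{t+1}-1)` band matrix `M` of the pre-wavelet change of
basis in one dimension (1-based indices): even columns are interpolation columns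
`(1/2, 1, 1/2)`, interior odd columns are pre-wavelet columns
`(1/10, -3/5, 1, -3/5, 1/10)`, and the two boundary odd columns carry the
modified coefficients `(9/10, -3/5, 1/10)`. -/
noncomputable def Mband (t : ℕ) : Matrix (Fin (2 ^ (t + 1) - 1)) (Fin (2 ^ (t + 1) - 1)) ℝ :=
  Matrix.of fun i j =>
    let iv : ℤ := (i : ℤ) + 1
    let jv : ℤ := (j : ℤ) + 1
    if jv % 2 = 0 then
      (if iv = jv then 1 else if |iv - jv| = 1 then 1/2 else 0)
    else if jv = 1 then
      (if iv = 1 then 9/10 else if iv = 2 then -(3/5) else if iv = 3 then 1/10 else 0)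
    else if jv = 2 ^ (t + 1) - 1 then
      (if iv = jv then 9/10 else if iv = jv - 1 then -(3/5)
        else if iv = jv - 2 then 1/10 else 0)
    else
      (if iv = jv then 1 else if |iv - jv| = 1 then -(3/5)
        else if |iv - jv| = 2 then 1/10 else 0)

lemma Mband_apply (t : ℕ) (i j : Fin (2 ^ (t + 1) - 1)) (iv jv : ℤ)
    (hi : (i : ℤ) + 1 = iv) (hj : (j : ℤ) + 1 = jv) :
    Mband t i j =
      if jv % 2 = 0 then
        (if iv = jv then 1 else if |iv - jv| = 1 then 1/2 else 0)
      else if jv = 1 then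
        (if iv = 1 then 9/10 else if iv = 2 then -(3/5) else if iv = 3 then 1/10 else 0)
      else if jv = 2 ^ (t + 1) - 1 then
        (if iv = jv then 9/10 else if iv = jv - 1 then -(3/5)
          else if iv = jv - 2 then 1/10 else 0)
      else
        (if iv = jv then 1 else if |iv - jv| = 1 then -(3/5)
          else if |iv - jv| = 2 then 1/10 else 0) := by
  subst hi hj; rfl

lemma sum_pick {n : ℕ} (w : Fin n → ℝ) (k : ℤ) (h1 : 1 ≤ k) (h2 : k ≤ n) :
    ∑ i : Fin n, (if ((i : ℤ) + 1 = k) then w i else 0)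
      = w ⟨(k - 1).toNat, by omega⟩ := by
  rw [Finset.sum_eq_single (⟨(k-1).toNat, by omega⟩ : Fin n)]
  · rw [if_pos]
    simp only [Fin.val_mk]
    omega
  · intro b _ hb
    rw [if_neg]
    intro hbk
    exact hb (Fin.ext (by simp only [Fin.val_mk]; omega))
  · intro h; exact absurd (Finset.mem_univ _) h


lemma pick_sum3 {n : ℕ} (v : Fin n → ℝ) (c1 c2 c3 : ℝ) (k1 k2 k3 : ℤ)
    (ha1 : 1 ≤ k1) (hb1 : k1 ≤ n) (ha2 : 1 ≤ k2) (hb2 : k2 ≤ n)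
    (ha3 : 1 ≤ k3) (hb3 : k3 ≤ n) :
    ∑ i : Fin n, ((if ((i : ℤ) + 1 = k1) then c1 * v i else 0)
      + (if ((i : ℤ) + 1 = k2) then c2 * v i else 0)
      + (if ((i : ℤ) + 1 = k3) then c3 * v i else 0))
    = c1 * v ⟨(k1 - 1).toNat, by omega⟩ + c2 * v ⟨(k2 - 1).toNat, by omega⟩
      + c3 * v ⟨(k3 - 1).toNat, by omega⟩ := by
  rw [Finset.sum_add_distrib, Finset.sum_add_distrib,
    sum_pick (fun i => c1 * v i) k1 ha1 hb1,
    sum_pick (fun i => c2 * v i) k2 ha2 hb2,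
    sum_pick (fun i => c3 * v i) k3 ha3 hb3]

lemma pick_sum5 {n : ℕ} (v : Fin n → ℝ) (c1 c2 c3 c4 c5 : ℝ) (k1 k2 k3 k4 k5 : ℤ)
    (ha1 : 1 ≤ k1) (hb1 : k1 ≤ n) (ha2 : 1 ≤ k2) (hb2 : k2 ≤ n)
    (ha3 : 1 ≤ k3) (hb3 : k3 ≤ n) (ha4 : 1 ≤ k4) (hb4 : k4 ≤ n)
    (ha5 : 1 ≤ k5) (hb5 : k5 ≤ n) :
    ∑ i : Fin n, (((if ((i : ℤ) + 1 = k1) then c1 * v i else 0)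
      + (if ((i : ℤ) + 1 = k2) then c2 * v i else 0)
      + (if ((i : ℤ) + 1 = k3) then c3 * v i else 0))
      + ((if ((i : ℤ) + 1 = k4) then c4 * v i else 0)
      + (if ((i : ℤ) + 1 = k5) then c5 * v i else 0)))
    = (c1 * v ⟨(k1 - 1).toNat, by omega⟩ + c2 * v ⟨(k2 - 1).toNat, by omega⟩
      + c3 * v ⟨(k3 - 1).toNat, by omega⟩)
      + (c4 * v ⟨(k4 - 1).toNat, by omega⟩ + c5 * v ⟨(k5 - 1).toNat, by omega⟩) := by
  rw [Finset.sum_add_distrib, Finset.sum_add_distrib, Finset.sum_add_distrib,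
    Finset.sum_add_distrib,
    sum_pick (fun i => c1 * v i) k1 ha1 hb1,
    sum_pick (fun i => c2 * v i) k2 ha2 hb2,
    sum_pick (fun i => c3 * v i) k3 ha3 hb3,
    sum_pick (fun i => c4 * v i) k4 ha4 hb4,
    sum_pick (fun i => c5 * v i) k5 ha5 hb5]

set_option maxHeartbeats 1000000 in
lemma kernel_aux (N m : ℕ) (hm2 : 2 ≤ m) (hNm : N + 1 = 2 * m)
    (A : Matrix (Fin N) (Fin N) ℝ)
    (hA : ∀ (i j : Fin N) (iv jv : ℤ), (i : ℤ) + 1 = iv → (j : ℤ) + 1 = jv →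
      A i j =
        if jv % 2 = 0 then
          (if iv = jv then 1 else if |iv - jv| = 1 then 1/2 else 0)
        else if jv = 1 then
          (if iv = 1 then 9/10 else if iv = 2 then -(3/5) else if iv = 3 then 1/10 else 0)
        else if jv = (N : ℤ) then
          (if iv = jv then 9/10 else if iv = jv - 1 then -(3/5)
            else if iv = jv - 2 then 1/10 else 0)
        else
          (if iv = jv then 1 else if |iv - jv| = 1 then -(3/5)
            else if |iv - jv| = 2 then 1/10 else 0))
    (v : Fin N → ℝ) (hvM : Matrix.vecMul v A = 0) : v = 0 := by
  have hN3 : 3 ≤ N := by omega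
  have hNodd : N % 2 = 1 := by omega
  have hNmZ : (N : ℤ) = 2 * (m : ℤ) - 1 := by
    have : ((N : ℤ)) + 1 = 2 * (m : ℤ) := by exact_mod_cast hNm
    omega
  have hmZ2 : (2 : ℤ) ≤ (m : ℤ) := by exact_mod_cast hm2
  obtain ⟨V, hVin, hVout⟩ :
      ∃ V : ℤ → ℝ, (∀ k : ℤ, ∀ h : 1 ≤ k ∧ k ≤ (N : ℤ),
          V k = v ⟨(k - 1).toNat, by omega⟩) ∧
        (∀ k : ℤ, ¬(1 ≤ k ∧ k ≤ (N : ℤ)) → V k = 0) := by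
    refine ⟨fun k => if h : 1 ≤ k ∧ k ≤ (N : ℤ) then v ⟨(k - 1).toNat, by omega⟩ else 0,
      fun k h => dif_pos h, fun k h => dif_neg h⟩
  have col : ∀ j : Fin N, ∑ i : Fin N, v i * A i j = 0 := by
    intro j
    have := congrFun hvM j
    simpa [Matrix.vecMul, dotProduct] using this
  have habs1 : ∀ a : ℤ, (|a| = 1) ↔ a = 1 ∨ a = -1 := fun a => abs_eq one_pos.le
  have habs2 : ∀ a : ℤ, (|a| = 2) ↔ a = 2 ∨ a = -2 := fun a => abs_eq (by norm_num)
  -- even columns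
  have hE : ∀ jz : ℤ, 2 ≤ jz → jz ≤ (N : ℤ) - 1 → jz % 2 = 0 →
      V (jz - 1) + 2 * V jz + V (jz + 1) = 0 := by
    intro jz h2 h3 h4
    have hcol := col ⟨(jz - 1).toNat, by omega⟩
    have hjv : ((⟨(jz - 1).toNat, by omega⟩ : Fin N) : ℤ) + 1 = jz := by
      simp only [Fin.val_mk]; omega
    have hrw : ∀ i : Fin N, v i * A i ⟨(jz - 1).toNat, by omega⟩
        = (if ((i : ℤ) + 1 = jz - 1) then (1/2) * v i else 0)
        + (if ((i : ℤ) + 1 = jz) then 1 * v i else 0)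
        + (if ((i : ℤ) + 1 = jz + 1) then (1/2) * v i else 0) := by
      intro i
      rw [hA i _ ((i : ℤ) + 1) jz rfl hjv]
      simp only [habs1, habs2]
      split_ifs <;> first | ring1 | (exfalso; omega)
    rw [Finset.sum_congr rfl fun i _ => hrw i,
      pick_sum3 v (1/2) 1 (1/2) (jz - 1) jz (jz + 1) (by omega) (by omega)
        (by omega) (by omega) (by omega) (by omega)] at hcol
    linarith [hcol, hVin (jz - 1) ⟨by omega, by omega⟩, hVin jz ⟨by omega, by omega⟩,
      hVin (jz + 1) ⟨by omega, by omega⟩]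
  -- first column
  have hB : 9 * V 1 - 6 * V 2 + V 3 = 0 := by
    have hcol := col ⟨0, by omega⟩
    have hjv : ((⟨0, by omega⟩ : Fin N) : ℤ) + 1 = 1 := by
      simp only [Fin.val_mk]; omega
    have hrw : ∀ i : Fin N, v i * A i ⟨0, by omega⟩
        = (if ((i : ℤ) + 1 = 1) then (9/10) * v i else 0)
        + (if ((i : ℤ) + 1 = 2) then -(3/5) * v i else 0)
        + (if ((i : ℤ) + 1 = 3) then (1/10) * v i else 0) := by
      intro i
      rw [hA i _ ((i : ℤ) + 1) 1 rfl hjv]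
      simp only [habs1, habs2]
      split_ifs <;> first | ring1 | (exfalso; omega)
    rw [Finset.sum_congr rfl fun i _ => hrw i,
      pick_sum3 v (9/10) (-(3/5)) (1/10) 1 2 3 (by omega) (by omega)
        (by omega) (by omega) (by omega) (by omega)] at hcol
    rw [← hVin 1 ⟨by omega, by omega⟩, ← hVin 2 ⟨by omega, by omega⟩,
      ← hVin 3 ⟨by omega, by omega⟩] at hcol
    linarith [hcol, hVin 1 ⟨by omega, by omega⟩, hVin 2 ⟨by omega, by omega⟩,
      hVin 3 ⟨by omega, by omega⟩]
  -- last column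
  have hC : V ((N : ℤ) - 2) - 6 * V ((N : ℤ) - 1) + 9 * V (N : ℤ) = 0 := by
    have hcol := col ⟨N - 1, by omega⟩
    have hjv : ((⟨N - 1, by omega⟩ : Fin N) : ℤ) + 1 = (N : ℤ) := by
      simp only [Fin.val_mk]; omega
    have hrw : ∀ i : Fin N, v i * A i ⟨N - 1, by omega⟩
        = (if ((i : ℤ) + 1 = (N : ℤ) - 2) then (1/10) * v i else 0)
        + (if ((i : ℤ) + 1 = (N : ℤ) - 1) then -(3/5) * v i else 0)
        + (if ((i : ℤ) + 1 = (N : ℤ)) then (9/10) * v i else 0) := by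
      intro i
      rw [hA i _ ((i : ℤ) + 1) (N : ℤ) rfl hjv]
      simp only [habs1, habs2]
      split_ifs <;> first | ring1 | (exfalso; omega)
    rw [Finset.sum_congr rfl fun i _ => hrw i,
      pick_sum3 v (1/10) (-(3/5)) (9/10) ((N : ℤ) - 2) ((N : ℤ) - 1) (N : ℤ)
        (by omega) (by omega) (by omega) (by omega) (by omega) (by omega)] at hcol
    linarith [hcol, hVin ((N : ℤ) - 2) ⟨by omega, by omega⟩,
      hVin ((N : ℤ) - 1) ⟨by omega, by omega⟩, hVin (N : ℤ) ⟨by omega, by omega⟩]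
  -- interior odd columns
  have hD : ∀ jz : ℤ, 3 ≤ jz → jz ≤ (N : ℤ) - 2 → jz % 2 = 1 →
      V (jz - 2) - 6 * V (jz - 1) + 10 * V jz - 6 * V (jz + 1) + V (jz + 2) = 0 := by
    intro jz h2 h3 h4
    have hcol := col ⟨(jz - 1).toNat, by omega⟩
    have hjv : ((⟨(jz - 1).toNat, by omega⟩ : Fin N) : ℤ) + 1 = jz := by
      simp only [Fin.val_mk]; omega
    have hrw : ∀ i : Fin N, v i * A i ⟨(jz - 1).toNat, by omega⟩
        = ((if ((i : ℤ) + 1 = jz - 2) then (1/10) * v i else 0)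
        + (if ((i : ℤ) + 1 = jz - 1) then -(3/5) * v i else 0)
        + (if ((i : ℤ) + 1 = jz) then 1 * v i else 0))
        + ((if ((i : ℤ) + 1 = jz + 1) then -(3/5) * v i else 0)
        + (if ((i : ℤ) + 1 = jz + 2) then (1/10) * v i else 0)) := by
      intro i
      rw [hA i _ ((i : ℤ) + 1) jz rfl hjv]
      simp only [habs1, habs2]
      split_ifs <;> first | ring1 | (exfalso; omega)
    rw [Finset.sum_congr rfl fun i _ => hrw i,
      pick_sum5 v (1/10) (-(3/5)) 1 (-(3/5)) (1/10) (jz - 2) (jz - 1) jz (jz + 1) (jz + 2)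
        (by omega) (by omega) (by omega) (by omega) (by omega) (by omega)
        (by omega) (by omega) (by omega) (by omega)] at hcol
    linarith [hcol, hVin (jz - 2) ⟨by omega, by omega⟩, hVin (jz - 1) ⟨by omega, by omega⟩,
      hVin jz ⟨by omega, by omega⟩, hVin (jz + 1) ⟨by omega, by omega⟩,
      hVin (jz + 2) ⟨by omega, by omega⟩]
  -- eliminate even entries
  have h1 : 3 * V 1 + V 3 = 0 := by
    have hE2 := hE 2 (by omega) (by omega) (by omega)
    norm_num at hE2
    linarith [hB, hE2]
  have hmid : ∀ jz : ℤ, 3 ≤ jz → jz ≤ (N : ℤ) - 2 → jz % 2 = 1 →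
      V (jz - 2) + 4 * V jz + V (jz + 2) = 0 := by
    intro jz h2 h3 h4
    have hDj := hD jz h2 h3 h4
    have hEm := hE (jz - 1) (by omega) (by omega) (by omega)
    have hEp := hE (jz + 1) (by omega) (by omega) (by omega)
    have e1 : jz - 1 - 1 = jz - 2 := by ring
    have e2 : jz - 1 + 1 = jz := by ring
    have e3 : jz + 1 - 1 = jz := by ring
    have e4 : jz + 1 + 1 = jz + 2 := by ring
    rw [e1, e2] at hEm
    rw [e3, e4] at hEp
    linarith [hDj, hEm, hEp]
  have hend : V ((N : ℤ) - 2) + 3 * V (N : ℤ) = 0 := by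
    have hEn := hE ((N : ℤ) - 1) (by omega) (by omega) (by omega)
    have e1 : (N : ℤ) - 1 - 1 = (N : ℤ) - 2 := by ring
    have e2 : (N : ℤ) - 1 + 1 = (N : ℤ) := by ring
    rw [e1, e2] at hEn
    linarith [hC, hEn]
  -- the odd subsequence
  obtain ⟨y, hy⟩ : ∃ y : ℕ → ℝ, ∀ k : ℕ, y k = V (2 * (k : ℤ) - 1) :=
    ⟨fun k => V (2 * (k : ℤ) - 1), fun _ => rfl⟩
  have hy1 : y 2 = -3 * y 1 := by
    rw [hy, hy]; norm_num; linarith [h1]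
  have hyrec : ∀ k : ℕ, 1 ≤ k → (k : ℤ) + 1 ≤ (m : ℤ) - 1 →
      y k + 4 * y (k + 1) + y (k + 2) = 0 := by
    intro k hk1 hkm
    have hmd := hmid (2 * (k : ℤ) + 1) (by omega) (by omega) (by omega)
    have e1 : 2 * (k : ℤ) + 1 - 2 = 2 * (k : ℤ) - 1 := by ring
    have e2 : 2 * (k : ℤ) + 1 + 2 = 2 * ((k : ℤ) + 2) - 1 := by ring
    have e3 : 2 * (k : ℤ) + 1 = 2 * ((k : ℤ) + 1) - 1 := by ring
    rw [e1, e2, e3] at hmd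
    rw [hy, hy, hy]
    push_cast
    linarith [hmd]
  have hylast : y (m - 1) + 3 * y m = 0 := by
    have e0 : ((m - 1 : ℕ) : ℤ) = (m : ℤ) - 1 := by omega
    rw [hy, hy, e0]
    have e1 : 2 * ((m : ℤ) - 1) - 1 = (N : ℤ) - 2 := by omega
    have e2 : 2 * (m : ℤ) - 1 = (N : ℤ) := by omega
    rw [e1, e2]
    exact hend
  -- growth
  have G : ∀ k : ℕ, 1 ≤ k → k + 1 ≤ m → 3 * |y k| ≤ |y (k + 1)| := by
    intro k
    induction k with
    | zero => omega
    | succ k ih =>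
      intro _ hk2
      show 3 * |y (k + 1)| ≤ |y (k + 2)|
      rcases Nat.eq_zero_or_pos k with hk0 | hk1
      · subst hk0
        rw [hy1, abs_mul]
        norm_num
      · have ihk := ih hk1 (by omega)
        have hrec := hyrec k hk1 (by push_cast; omega)
        have habs := abs_add_le (y k) (y (k + 2))
        have he : y k + y (k + 2) = -(4 * y (k + 1)) := by linarith
        rw [he, abs_neg, abs_mul] at habs
        have h4 : |(4 : ℝ)| = 4 := by norm_num
        rw [h4] at habs
        linarith [abs_nonneg (y (k + 1))]
  -- endpoint zero
  have hym : y m = 0 := by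
    have hg := G (m - 1) (by omega) (by omega)
    have e : m - 1 + 1 = m := by omega
    rw [e] at hg
    have he : y (m - 1) = -(3 * y m) := by linarith [hylast]
    rw [he, abs_neg, abs_mul] at hg
    have h3 : |(3 : ℝ)| = 3 := by norm_num
    rw [h3] at hg
    have h0 : |y m| = 0 := by
      have := abs_nonneg (y m)
      linarith
    exact abs_eq_zero.mp h0
  -- downward zeros
  have ydown : ∀ d : ℕ, ∀ k : ℕ, 1 ≤ k → k + d = m → y k = 0 := by
    intro d
    induction d with
    | zero =>
      intro k hk1 hkm
      have : k = m := by omega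
      rw [this]; exact hym
    | succ d ih =>
      intro k hk1 hkm
      have hnext : y (k + 1) = 0 := ih (k + 1) (by omega) (by omega)
      have hg := G k hk1 (by omega)
      rw [hnext] at hg
      have h0 : |y k| = 0 := by
        have := abs_nonneg (y k)
        simp at hg
        linarith
      exact abs_eq_zero.mp h0
  have yzero : ∀ k : ℕ, 1 ≤ k → k ≤ m → y k = 0 := fun k hk1 hkm =>
    ydown (m - k) k hk1 (by omega)
  -- all odd entries vanish
  have hodd : ∀ k : ℤ, 1 ≤ k → k ≤ (N : ℤ) → k % 2 = 1 → V k = 0 := by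
    intro k hk1 hkN hk2
    have hkk : 2 * (((k + 1) / 2).toNat : ℤ) - 1 = k := by omega
    have := yzero ((k + 1) / 2).toNat (by omega) (by omega)
    rw [hy, hkk] at this
    exact this
  -- all entries vanish
  have hall : ∀ k : ℤ, 1 ≤ k → k ≤ (N : ℤ) → V k = 0 := by
    intro k hk1 hkN
    rcases Int.emod_two_eq k with hk2 | hk2
    · have hEk := hE k (by omega) (by omega) hk2
      have ha := hodd (k - 1) (by omega) (by omega) (by omega)
      have hb := hodd (k + 1) (by omega) (by omega) (by omega)
      linarith
    · exact hodd k hk1 hkN hk2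
  funext i
  have hi : 1 ≤ ((i : ℤ) + 1) ∧ ((i : ℤ) + 1) ≤ (N : ℤ) := by
    have := i.isLt; omega
  have hz := hall ((i : ℤ) + 1) hi.1 hi.2
  rw [hVin _ hi] at hz
  have he : (⟨((i : ℤ) + 1 - 1).toNat, by omega⟩ : Fin N) = i := by
    apply Fin.ext; simp only [Fin.val_mk]; omega
  rw [he] at hz
  exact hz

/-- The pre-wavelet transformation matrix `M` is invertible for every `t ≥ 1`;
in particular for `t = 1` the explicit `3 × 3` matrix
`[[9/10, 1/2, 1/10], [-3/5, 1, -3/5], [1/10, 1/2, 9/10]]` is invertible. -/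
theorem Mband_invertible :
    (∀ t : ℕ, 1 ≤ t → (Mband t).det ≠ 0) ∧
    (!![(9:ℝ)/10, 1/2, 1/10; -(3/5), 1, -(3/5); 1/10, 1/2, 9/10]).det ≠ 0 := by
  constructor
  · intro t ht h0
    obtain ⟨v, hv0, hvM⟩ := Matrix.exists_vecMul_eq_zero_iff.mpr h0
    have hm2 : 2 ≤ 2 ^ t := by
      calc 2 = 2 ^ 1 := rfl
      _ ≤ 2 ^ t := Nat.pow_le_pow_right (by norm_num) ht
    have hNm : (2 ^ (t + 1) - 1) + 1 = 2 * 2 ^ t := by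
      have h1 : 1 ≤ 2 ^ (t + 1) := Nat.one_le_two_pow
      have h2 : 2 ^ (t + 1) = 2 * 2 ^ t := by rw [pow_succ]; ring
      omega
    have hNpow : (((2 ^ (t + 1) - 1 : ℕ)) : ℤ) = 2 ^ (t + 1) - 1 := by
      have h1 : 1 ≤ 2 ^ (t + 1) := Nat.one_le_two_pow
      have : ((2 ^ (t + 1) - 1 : ℕ) : ℤ) + 1 = ((2 ^ (t + 1) : ℕ) : ℤ) := by omega
      push_cast at this
      omega
    apply hv0
    refine kernel_aux (2 ^ (t + 1) - 1) (2 ^ t) hm2 hNm (Mband t) ?_ v hvM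
    intro i j iv jv hi hj
    rw [Mband_apply t i j iv jv hi hj, hNpow]
  · simp [Matrix.det_fin_three]; norm_num
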